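/- arXiv:1202.5782 — 10 statements merged into one kernel-verified Lean document; each statement's English description precedes it below -/
import Mathlib

section
/- Let M be a nonzero R-module. Then the following are equivalent: (a) M satisfies the (**) condition; (b) every nonzero submodule of M is a socle submodule of M, i.e., every nonzero submodule N of M equals the sum of all second submodules of M contained in N. -/
open Pointwise

variable (R M : Type*) [CommRing R] [AddCommGroup M] [Module R M]

/-- A nonzero submodule `S` is *second* if for every `r : R`, `r • S = S` or `r • S = ⊥`. -/
def IsSecondSubmodule (S : Submodule R M) : Prop :=
  S ≠ ⊥ ∧ ∀ r : R, r • S = S ∨ r • S = ⊥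

/-- The second spectrum of `M`: the collection of all second submodules of `M`. -/
def SecondSpec : Type _ := {S : Submodule R M // IsSecondSubmodule R M S}

/-- `V^{s*}(N)`: the set of second submodules contained in `N`. -/
def Vs (N : Submodule R M) : Set (SecondSpec R M) := {S | S.1 ≤ N}

/-- `W^s(N)`: the complement of `V^{s*}(N)` in `Spec^s(M)`. -/
def Ws (N : Submodule R M) : Set (SecondSpec R M) := (Vs R M N)ᶜ

/-- The second classical Zariski topology on `Spec^s(M)`, generated by the
sub-basis `{W^s(N) : N ≤ M}`. -/
instance secondZariski : TopologicalSpace (SecondSpec R M) :=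
  TopologicalSpace.generateFrom {U | ∃ N : Submodule R M, U = Ws R M N}

/-- The second socle of a submodule `N`: the sum of all second submodules of `M`
contained in `N`. -/
def secSocle (N : Submodule R M) : Submodule R M :=
  sSup {S : Submodule R M | IsSecondSubmodule R M S ∧ S ≤ N}

/-- Prop 2.2: For a nonzero module `M`, the `(**)` condition holds iff every nonzero
submodule of `M` is a socle submodule, i.e. equals the sum of all second submodules of `M`
contained in it. -/
theorem stmt0 [Nontrivial M] :
    (∀ N₁ N₂ : Submodule R M, Vs R M N₁ = Vs R M N₂ → N₁ = N₂) ↔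
      (∀ N : Submodule R M, N ≠ ⊥ → N = secSocle R M N) := by
  constructor
  · intro h N _
    apply h
    ext S
    simp only [Vs, Set.mem_setOf_eq]
    constructor
    · intro hS
      exact le_sSup ⟨S.2, hS⟩
    · intro hS
      exact hS.trans (sSup_le fun T hT => hT.2)
  · intro h N₁ N₂ hV
    have key : ∀ S : Submodule R M, (IsSecondSubmodule R M S ∧ S ≤ N₁) ↔
        (IsSecondSubmodule R M S ∧ S ≤ N₂) := by
      intro S
      constructor
      · rintro ⟨hs, hle⟩
        exact ⟨hs, Set.ext_iff.mp hV ⟨S, hs⟩ |>.mp hle⟩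
      · rintro ⟨hs, hle⟩
        exact ⟨hs, Set.ext_iff.mp hV ⟨S, hs⟩ |>.mpr hle⟩
    have hsoc : secSocle R M N₁ = secSocle R M N₂ := by
      unfold secSocle
      congr 1
      ext S
      exact key S
    by_cases h1 : N₁ = ⊥ <;> by_cases h2 : N₂ = ⊥
    · rw [h1, h2]
    · exfalso
      have := h N₂ h2
      have : N₂ ≤ ⊥ := by
        rw [this]
        apply sSup_le
        rintro S ⟨hs, hle⟩
        have : (⟨S, hs⟩ : SecondSpec R M) ∈ Vs R M N₂ := hle
        rw [← hV, h1] at this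
        exact this
      exact h2 (le_bot_iff.mp this)
    · exfalso
      have := h N₁ h1
      have : N₁ ≤ ⊥ := by
        rw [this]
        apply sSup_le
        rintro S ⟨hs, hle⟩
        have : (⟨S, hs⟩ : SecondSpec R M) ∈ Vs R M N₁ := hle
        rw [hV, h2] at this
        exact this
      exact h1 (le_bot_iff.mp this)
    · rw [h N₁ h1, h N₂ h2, hsoc]
end

section
/- Let M be an R-module. Then Spec^s(M), equipped with the second classical Zariski topology, is a T1-space if and only if S.dim(M) ≤ 0, that is, if and only if there do not exist second submodules S1, S2 of M with S1 strictly contained in S2. -/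
open Pointwise

variable (R M : Type*) [CommRing R] [AddCommGroup M] [Module R M]

lemma secondZariski_mono {S₁ S₂ : SecondSpec R M} (hle : S₁.1 ≤ S₂.1) :
    ∀ U : Set (SecondSpec R M),
      TopologicalSpace.GenerateOpen {U | ∃ N : Submodule R M, U = Ws R M N} U →
      S₁ ∈ U → S₂ ∈ U := by
  intro U hU
  induction hU with
  | basic V hV =>
      obtain ⟨N, rfl⟩ := hV
      intro h1 h2
      exact h1 (hle.trans h2)
  | univ => exact fun _ => trivial
  | inter U V _ _ ihU ihV => exact fun h => ⟨ihU h.1, ihV h.2⟩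
  | sUnion S _ ih => rintro ⟨U, hU, hm⟩; exact ⟨U, hU, ih U hU hm⟩

/-- Thm 2.6: `Spec^s(M)` is a T1-space iff `S.dim M ≤ 0`, i.e. there are no second
submodules `S₁ ⊊ S₂` of `M`. -/
theorem stmt2 :
    T1Space (SecondSpec R M) ↔
      ¬ ∃ S₁ S₂ : Submodule R M,
          IsSecondSubmodule R M S₁ ∧ IsSecondSubmodule R M S₂ ∧ S₁ < S₂ := by
  constructor
  · rintro h ⟨S₁, S₂, h₁, h₂, hlt⟩
    have hcl : IsClosed ({(⟨S₂, h₂⟩ : SecondSpec R M)} : Set (SecondSpec R M)) :=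
      h.t1 _
    have hop : TopologicalSpace.GenerateOpen {U | ∃ N : Submodule R M, U = Ws R M N}
        ({(⟨S₂, h₂⟩ : SecondSpec R M)} : Set (SecondSpec R M))ᶜ := hcl.isOpen_compl
    have hmem : (⟨S₁, h₁⟩ : SecondSpec R M) ∈
        ({(⟨S₂, h₂⟩ : SecondSpec R M)} : Set (SecondSpec R M))ᶜ := by
      intro hmem
      exact (ne_of_lt hlt) (congrArg Subtype.val hmem)
    exact secondZariski_mono R M (le_of_lt hlt) _ hop hmem rfl
  · intro h
    refine ⟨fun S => ?_⟩
    have hcompl : ({S} : Set (SecondSpec R M))ᶜ = Ws R M S.1 := by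
      ext T
      simp only [Set.mem_compl_iff, Set.mem_singleton_iff, Ws, Vs, Set.mem_setOf_eq]
      constructor
      · intro hne hle
        rcases lt_or_eq_of_le hle with hlt | heq
        · exact h ⟨T.1, S.1, T.2, S.2, hlt⟩
        · exact hne (Subtype.ext heq)
      · intro hn heq
        exact hn (heq ▸ le_refl _)
    rw [← isOpen_compl_iff, hcompl]
    exact TopologicalSpace.GenerateOpen.basic _ ⟨S.1, rfl⟩
end

section
/- Let R be a commutative Noetherian ring and M an R-module of finite length such that Spec^s(M), with the second classical Zariski topology, is a T1-space. Then M is a comultiplication R-module, i.e., every submodule N of M satisfies N = (0 :_M Ann_R(N)). -/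
open Pointwise

variable (R M : Type*) [CommRing R] [AddCommGroup M] [Module R M]

section Aux

variable {R M}

/-- `(0 :_M I)`, the set of elements of `M` killed by the ideal `I`. -/
def annM (I : Ideal R) : Submodule R M where
  carrier := {x | ∀ r ∈ I, r • x = 0}
  add_mem' := fun {a b} ha hb => by
    intro r hr
    rw [smul_add, ha r hr, hb r hr, add_zero]
  zero_mem' := fun r _ => smul_zero r
  smul_mem' := fun c x hx => by
    intro r hr
    rw [smul_comm, hx r hr, smul_zero]

lemma mem_annM {I : Ideal R} {x : M} :
    x ∈ (annM I : Submodule R M) ↔ ∀ r ∈ I, r • x = 0 := Iff.rfl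

lemma annM_top : (annM (⊤ : Ideal R) : Submodule R M) = ⊥ := by
  rw [eq_bot_iff]
  intro x hx
  have := hx 1 trivial
  rw [one_smul] at this
  simpa using this

lemma annM_anti {I J : Ideal R} (h : I ≤ J) :
    (annM J : Submodule R M) ≤ annM I := fun _ hx r hr => hx r (h hr)

lemma le_annM_annihilator (N : Submodule R M) : N ≤ annM N.annihilator :=
  fun x hx r hr => Submodule.mem_annihilator.mp hr x hx

/-- From the T1 hypothesis: no strict inclusions between second submodules. -/
lemma second_le_eq (hT1 : T1Space (SecondSpec R M)) {S T : Submodule R M}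
    (hS : IsSecondSubmodule R M S) (hT : IsSecondSubmodule R M T) (hle : T ≤ S) : T = S := by
  let pS : SecondSpec R M := ⟨S, hS⟩
  let pT : SecondSpec R M := ⟨T, hT⟩
  have hopen : ∀ U : Set (SecondSpec R M), IsOpen U → pT ∈ U → pS ∈ U := by
    intro U hU
    have hU' : TopologicalSpace.GenerateOpen {U | ∃ N : Submodule R M, U = Ws R M N} U := hU
    clear hU
    induction hU' with
    | basic V hV =>
      obtain ⟨N, rfl⟩ := hV
      intro h
      simp only [Ws, Vs, Set.mem_compl_iff, Set.mem_setOf_eq] at h ⊢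
      exact fun hc => h (le_trans hle hc)
    | univ => intro _; trivial
    | inter V W _ _ ihV ihW => exact fun h => ⟨ihV h.1, ihW h.2⟩
    | sUnion 𝒮 _ ih =>
      rintro ⟨V, hV, hmem⟩
      exact ⟨V, hV, ih V hV hmem⟩
  have hmem : pT ∈ closure ({pS} : Set (SecondSpec R M)) := by
    rw [mem_closure_iff]
    intro o ho hpT
    exact ⟨pS, hopen o ho hpT, rfl⟩
  rw [closure_singleton, Set.mem_singleton_iff] at hmem
  exact congrArg Subtype.val hmem

/-- Any nonzero submodule of `(0 :_M 𝔪)`, `𝔪` maximal, is second. -/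
lemma isSecond_of_le_annM {m : Ideal R} (hm : m.IsMaximal) {P : Submodule R M}
    (hle : P ≤ annM m) (hP : P ≠ ⊥) : IsSecondSubmodule R M P := by
  refine ⟨hP, fun r => ?_⟩
  by_cases hr : r ∈ m
  · right
    rw [eq_bot_iff]
    intro x hx
    rw [← SetLike.mem_coe, Submodule.coe_pointwise_smul] at hx
    obtain ⟨y, hy, rfl⟩ := Set.mem_smul_set.mp hx
    rw [SetLike.mem_coe] at hy
    rw [Submodule.mem_bot]
    exact hle hy r hr
  · left
    refine le_antisymm (Submodule.smul_le_self_of_tower r P) ?_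
    obtain ⟨s, i, hi, hsi⟩ := hm.exists_inv hr
    intro x hx
    have h0 : i • x = 0 := hle hx i hi
    have hx' : x = r • (s • x) := by
      conv_lhs => rw [← one_smul R x, ← hsi]
      rw [add_smul, h0, add_zero, mul_comm, mul_smul]
    rw [hx']
    exact Submodule.smul_mem_pointwise_smul _ r P (P.smul_mem s hx)

/-- Any two elements of `(0 :_M 𝔪)`, `𝔪` maximal, are proportional (from T1). -/
lemma line_lemma (hT1 : T1Space (SecondSpec R M)) {m : Ideal R} (hm : m.IsMaximal) {u v : M}
    (hu : u ∈ (annM m : Submodule R M)) (hv : v ∈ (annM m : Submodule R M)) (hu0 : u ≠ 0) :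
    ∃ c : R, v = c • u := by
  have hspan : (R ∙ u) ≤ (annM m : Submodule R M) :=
    (Submodule.span_singleton_le_iff_mem u _).mpr hu
  have h1 : IsSecondSubmodule R M (R ∙ u) :=
    isSecond_of_le_annM hm hspan (by simpa [Submodule.span_singleton_eq_bot] using hu0)
  have h2 : IsSecondSubmodule R M (annM m) := by
    refine isSecond_of_le_annM hm le_rfl (fun hc => hu0 ?_)
    rw [hc, Submodule.mem_bot] at hu
    exact hu
  have heq : (R ∙ u) = (annM m : Submodule R M) := second_le_eq hT1 h2 h1 hspan
  have hv' : v ∈ (R ∙ u) := heq ▸ hv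
  obtain ⟨c, hc⟩ := Submodule.mem_span_singleton.mp hv'
  exact ⟨c, hc.symm⟩

/-- Cover step, module side: if `N ⋖ N'` then `Ann N' = Ann N` or `Ann N' ⋖ Ann N`. -/
lemma covstep1
    (hsoc : ∀ {m : Ideal R}, m.IsMaximal → ∀ {u v : M}, u ∈ (annM m : Submodule R M) →
      v ∈ (annM m : Submodule R M) → u ≠ 0 → ∃ c : R, v = c • u)
    {N N' : Submodule R M} (h : N ⋖ N') :
    N'.annihilator = N.annihilator ∨ N'.annihilator ⋖ N.annihilator := by
  have hmono : N'.annihilator ≤ N.annihilator := Submodule.annihilator_mono h.le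
  by_cases heq : N'.annihilator = N.annihilator
  · exact Or.inl heq
  right
  refine ⟨lt_of_le_of_ne hmono heq, fun J hJ1 hJ2 => ?_⟩
  obtain ⟨x', hx'N', hx'N⟩ := SetLike.exists_of_lt h.lt
  have key : ∀ z, z ∈ N' → z ∉ N → N ⊔ (R ∙ z) = N' := by
    intro z hz hzN
    have h1 : N < N ⊔ (R ∙ z) :=
      lt_of_le_of_ne le_sup_left
        (fun e => hzN (e ▸ Submodule.mem_sup_right (Submodule.mem_span_singleton_self z)))
    have h2 : N ⊔ (R ∙ z) ≤ N' :=
      sup_le h.le ((Submodule.span_singleton_le_iff_mem z _).mpr hz)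
    exact h2.lt_or_eq.resolve_left (h.2 h1)
  set m' : Ideal R := N.colon (R ∙ x') with hm'def
  have hm'mem : ∀ {w : R}, w ∈ m' ↔ w • x' ∈ N := fun {w} => Submodule.mem_colon_span_singleton
  have hm'max : m'.IsMaximal := by
    rw [Ideal.isMaximal_iff]
    constructor
    · intro h1
      exact hx'N (by simpa using hm'mem.mp h1)
    · intro J' w hm'J' hwm' hwJ'
      have hwx'N : w • x' ∉ N := fun hc => hwm' (hm'mem.mpr hc)
      have hkey : N ⊔ (R ∙ (w • x')) = N' := key _ (N'.smul_mem w hx'N') hwx'N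
      have hx'mem : x' ∈ N ⊔ (R ∙ (w • x')) := hkey ▸ hx'N'
      obtain ⟨n, hn, y, hy, hsum⟩ := Submodule.mem_sup.mp hx'mem
      obtain ⟨s, rfl⟩ := Submodule.mem_span_singleton.mp hy
      have hmem1 : (1 - s * w) • x' ∈ N := by
        have he : (1 - s * w) • x' = x' - s • (w • x') := by
          rw [sub_smul, one_smul, smul_smul]
        rw [he, ← eq_sub_of_add_eq hsum]
        exact hn
      have h1sw : 1 - s * w ∈ J' := hm'J' (hm'mem.mpr hmem1)
      have hone : (1 : R) = (1 - s * w) + s * w := by ring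
      rw [hone]
      exact J'.add_mem h1sw (J'.mul_mem_left s hwJ')
  obtain ⟨j, hjJ, hjann⟩ := SetLike.exists_of_lt hJ1
  have hjN : j ∈ N.annihilator := hJ2.le hjJ
  have hjx' : j • x' ≠ 0 := by
    intro hc
    apply hjann
    rw [Submodule.mem_annihilator]
    intro z hz
    rw [← key x' hx'N' hx'N] at hz
    obtain ⟨n, hn, y, hy, rfl⟩ := Submodule.mem_sup.mp hz
    obtain ⟨s, rfl⟩ := Submodule.mem_span_singleton.mp hy
    rw [smul_add, Submodule.mem_annihilator.mp hjN n hn, zero_add, smul_comm, hc,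
      smul_zero]
  have hmem : ∀ {r : R}, r ∈ N.annihilator → r • x' ∈ (annM m' : Submodule R M) := by
    intro r hr w hw
    rw [smul_comm, Submodule.mem_annihilator.mp hr _ (hm'mem.mp hw)]
  have hfin : N.annihilator ≤ J := by
    intro r hr
    obtain ⟨c, hc⟩ := hsoc hm'max (hmem hjN) (hmem hr) hjx'
    have h1 : (r - c * j) ∈ N'.annihilator := by
      rw [Submodule.mem_annihilator]
      intro z hz
      rw [← key x' hx'N' hx'N] at hz
      obtain ⟨n, hn, y, hy, rfl⟩ := Submodule.mem_sup.mp hz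
      obtain ⟨s, rfl⟩ := Submodule.mem_span_singleton.mp hy
      have hrn : (r - c * j) • n = 0 := by
        rw [sub_smul, Submodule.mem_annihilator.mp hr n hn, mul_smul,
          Submodule.mem_annihilator.mp hjN n hn, smul_zero, sub_zero]
      have hrx' : (r - c * j) • x' = 0 := by
        rw [sub_smul, mul_smul, ← hc, sub_self]
      rw [smul_add, hrn, zero_add, smul_comm, hrx', smul_zero]
    have h2 : r - c * j ∈ J := hJ1.le h1
    have h3 : r = (r - c * j) + c * j := by ring
    rw [h3]
    exact J.add_mem h2 (J.mul_mem_left c hjJ)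
  exact hJ2.not_ge hfin

/-- Cover step, ideal side: if `I ⋖ I'` then `(0:I') = (0:I)` or `(0:I') ⋖ (0:I)`. -/
lemma covstep2
    (hsoc : ∀ {m : Ideal R}, m.IsMaximal → ∀ {u v : M}, u ∈ (annM m : Submodule R M) →
      v ∈ (annM m : Submodule R M) → u ≠ 0 → ∃ c : R, v = c • u)
    {I I' : Ideal R} (h : I ⋖ I') :
    (annM I' : Submodule R M) = annM I ∨ (annM I' : Submodule R M) ⋖ annM I := by
  by_cases heq : (annM I' : Submodule R M) = annM I
  · exact Or.inl heq
  right
  refine ⟨lt_of_le_of_ne (annM_anti h.le) heq, fun P hP1 hP2 => ?_⟩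
  obtain ⟨r', hr'I', hr'I⟩ := SetLike.exists_of_lt h.lt
  have key : ∀ z, z ∈ I' → z ∉ I → I ⊔ (Ideal.span {z}) = I' := by
    intro z hz hzI
    have h1 : I < I ⊔ Ideal.span {z} :=
      lt_of_le_of_ne le_sup_left
        (fun e => hzI (e ▸ Submodule.mem_sup_right (Ideal.subset_span rfl)))
    have h2 : I ⊔ Ideal.span {z} ≤ I' :=
      sup_le h.le (Ideal.span_le.mpr (Set.singleton_subset_iff.mpr hz))
    exact h2.lt_or_eq.resolve_left (h.2 h1)
  obtain ⟨p, hpP, hpann⟩ := SetLike.exists_of_lt hP1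
  have hpannI : p ∈ (annM I : Submodule R M) := hP2.le hpP
  have hr'p : r' • p ≠ 0 := by
    intro hc
    apply hpann
    intro w hw
    rw [← key r' hr'I' hr'I] at hw
    obtain ⟨n, hn, y, hy, rfl⟩ := Submodule.mem_sup.mp hw
    obtain ⟨s, rfl⟩ := Ideal.mem_span_singleton'.mp hy
    rw [add_smul, hpannI n hn, zero_add, mul_smul, hc, smul_zero]
  set m'' : Ideal R := I.colon (Ideal.span {r'}) with hm''def
  have hm''mem : ∀ {w : R}, w ∈ m'' ↔ w * r' ∈ I := fun {w} => Ideal.mem_colon_span_singleton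
  have hm''max : m''.IsMaximal := by
    rw [Ideal.isMaximal_iff]
    constructor
    · intro h1
      exact hr'I (by simpa using hm''mem.mp h1)
    · intro J' w hm''J' hwm'' hwJ'
      have hwr'I : w * r' ∉ I := fun hc => hwm'' (hm''mem.mpr hc)
      have hwr'I' : w * r' ∈ I' := I'.mul_mem_left w hr'I'
      have hkey : I ⊔ Ideal.span {w * r'} = I' := key _ hwr'I' hwr'I
      have hr'mem : r' ∈ I ⊔ Ideal.span {w * r'} := hkey ▸ hr'I'
      obtain ⟨n, hn, y, hy, hsum⟩ := Submodule.mem_sup.mp hr'mem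
      obtain ⟨s, rfl⟩ := Ideal.mem_span_singleton'.mp hy
      have hmem1 : (1 - s * w) * r' ∈ I := by
        have he : (1 - s * w) * r' = r' - s * (w * r') := by ring
        rw [he, ← eq_sub_of_add_eq hsum]
        exact hn
      have h1sw : 1 - s * w ∈ J' := hm''J' (hm''mem.mpr hmem1)
      have hone : (1 : R) = (1 - s * w) + s * w := by ring
      rw [hone]
      exact J'.add_mem h1sw (J'.mul_mem_left s hwJ')
  have hmem2 : ∀ {x : M}, x ∈ (annM I : Submodule R M) →
      r' • x ∈ (annM m'' : Submodule R M) := by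
    intro x hx w hw
    rw [smul_smul, hx _ (hm''mem.mp hw)]
  have hfin : (annM I : Submodule R M) ≤ P := by
    intro x hx
    obtain ⟨c, hc⟩ := hsoc hm''max (hmem2 hpannI) (hmem2 hx) hr'p
    have h1 : x - c • p ∈ (annM I' : Submodule R M) := by
      intro w hw
      rw [← key r' hr'I' hr'I] at hw
      obtain ⟨n, hn, y, hy, rfl⟩ := Submodule.mem_sup.mp hw
      obtain ⟨s, rfl⟩ := Ideal.mem_span_singleton'.mp hy
      have hn0 : n • (x - c • p) = 0 := by
        rw [smul_sub, hx n hn, smul_comm, hpannI n hn, smul_zero, sub_zero]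
      have hr'0 : r' • (x - c • p) = 0 := by
        rw [smul_sub, hc, smul_comm r' c, sub_self]
      rw [add_smul, hn0, zero_add, mul_smul, hr'0, smul_zero]
    have h2 : x - c • p ∈ P := hP1.le h1
    rw [← sub_add_cancel x (c • p)]
    exact P.add_mem h2 (P.smul_mem c hpP)
  exact hP2.not_ge hfin

/-- Transfer a composition series along a monotone cover-or-equal map. -/
lemma trans_series {f : Submodule R M → Submodule R M}
    (hf : ∀ {A B : Submodule R M}, A ⋖ B → f A = f B ∨ f A ⋖ f B) :
    ∀ (n : ℕ) (s : CompositionSeries (Submodule R M)), s.length = n →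
      ∃ t : CompositionSeries (Submodule R M),
        t.head = f s.head ∧ t.last = f s.last ∧ t.length ≤ s.length := by
  intro n
  induction n with
  | zero =>
    intro s hn
    refine ⟨RelSeries.singleton _ (f s.head), RelSeries.head_singleton _, ?_, by simp⟩
    have hfin : Fin.last s.length = (0 : Fin (s.length + 1)) := by
      ext
      simp [hn]
    have hlast : s.last = s.head := by
      rw [RelSeries.last, RelSeries.head, hfin]
    rw [hlast]
    exact RelSeries.last_singleton _
  | succ n ih =>
    intro s hn
    have hs' : s.eraseLast.length = n := by
      simp [RelSeries.eraseLast_length, hn]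
    obtain ⟨t, ht1, ht2, ht3⟩ := ih s.eraseLast hs'
    have h0 : 0 < s.length := by omega
    have hcov : s.eraseLast.last ⋖ s.last :=
      CompositionSeries.isMaximal_eraseLast_last h0
    rcases hf hcov with heq | hcov2
    · refine ⟨t, ?_, ?_, by omega⟩
      · rw [ht1, RelSeries.head_eraseLast]
      · rw [ht2, heq]
    · refine ⟨t.snoc (f s.last) (by rw [ht2]; exact hcov2), ?_, ?_, ?_⟩
      · rw [RelSeries.head_snoc, ht1, RelSeries.head_eraseLast]
      · rw [RelSeries.last_snoc]
      · rw [RelSeries.snoc_length]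
        omega

/-- A composition series from `⊥` to a given submodule `N`. -/
lemma exists_series_bot_to [IsNoetherian R M] [IsArtinian R M] (N : Submodule R M) :
    ∃ u : CompositionSeries (Submodule R M), u.head = ⊥ ∧ u.last = N := by
  obtain ⟨s, hs1, hs2⟩ := exists_compositionSeries_of_isNoetherian_isArtinian R ↥N
  have hinj : Function.Injective N.subtype := N.injective_subtype
  have hg : ∀ {A B : Submodule R ↥N}, A ⋖ B →
      Submodule.map N.subtype A ⋖ Submodule.map N.subtype B := by
    intro A B hAB
    constructor
    · refine lt_of_le_of_ne (Submodule.map_mono hAB.le) (fun e => hAB.lt.ne ?_)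
      exact Submodule.map_injective_of_injective hinj e
    · intro z hz1 hz2
      have hzN : z ≤ N := le_trans hz2.le (Submodule.map_subtype_le N B)
      have hmapz : Submodule.map N.subtype (Submodule.comap N.subtype z) = z := by
        rw [Submodule.map_comap_subtype]
        exact inf_eq_right.mpr hzN
      have hA : A < Submodule.comap N.subtype z := by
        refine lt_of_le_of_ne ?_ (fun e => hz1.ne ?_)
        · rw [← Submodule.comap_map_eq_of_injective hinj A]
          exact Submodule.comap_mono hz1.le
        · rw [e, hmapz]
      have hB : Submodule.comap N.subtype z < B := by
        refine lt_of_le_of_ne ?_ (fun e => hz2.ne ?_)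
        · rw [← Submodule.comap_map_eq_of_injective hinj B]
          exact Submodule.comap_mono hz2.le
        · rw [← e, hmapz]
      exact hAB.2 hA hB
  refine ⟨s.map ⟨fun P => Submodule.map N.subtype P, fun {A B} h => hg h⟩, ?_, ?_⟩
  · rw [RelSeries.head_map]
    show Submodule.map N.subtype s.head = ⊥
    rw [hs1, Submodule.map_bot]
  · rw [RelSeries.last_map]
    show Submodule.map N.subtype s.last = N
    rw [hs2, Submodule.map_top, Submodule.range_subtype]

end Aux

/-- Thm 2.10: If `R` is Noetherian, `M` has finite length, and `Spec^s(M)` is a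
T1-space, then `M` is a comultiplication module: every submodule `N` satisfies
`N = (0 :_M Ann_R N)`. -/
theorem stmt3 [IsNoetherianRing R] (hfl : IsFiniteLength R M)
    (hT1 : T1Space (SecondSpec R M)) :
    ∀ N : Submodule R M, (N : Set M) = {m : M | ∀ r ∈ N.annihilator, r • m = (0 : M)} := by
  have hNA := isFiniteLength_iff_isNoetherian_isArtinian.mp hfl
  haveI := hNA.1
  haveI := hNA.2
  have hsoc : ∀ {m : Ideal R}, m.IsMaximal → ∀ {u v : M}, u ∈ (annM m : Submodule R M) →
      v ∈ (annM m : Submodule R M) → u ≠ 0 → ∃ c : R, v = c • u :=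
    fun {m} hm {u v} hu hv hu0 => line_lemma hT1 hm hu hv hu0
  have hfstep : ∀ {A B : Submodule R M}, A ⋖ B →
      (annM A.annihilator : Submodule R M) = annM B.annihilator ∨
        (annM A.annihilator : Submodule R M) ⋖ annM B.annihilator := by
    intro A B h
    rcases covstep1 hsoc h with heq | hc
    · left
      rw [heq]
    · exact covstep2 hsoc hc
  have key : ∀ N : Submodule R M, (annM N.annihilator : Submodule R M) = N := by
    intro N
    induction N using IsNoetherian.induction with
    | hgt N IH =>
    have hle : N ≤ annM N.annihilator := le_annM_annihilator N
    rcases eq_or_lt_of_le hle with heq | hlt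
    · exact heq.symm
    · exfalso
      obtain ⟨N₁, hN₁, hmin⟩ := IsArtinian.set_has_minimal
        {P : Submodule R M | N < P ∧ P ≤ annM N.annihilator} ⟨_, hlt, le_rfl⟩
      obtain ⟨hN₁gt, hN₁le⟩ := hN₁
      have hcov : N ⋖ N₁ :=
        ⟨hN₁gt, fun z hz1 hz2 => hmin z ⟨hz1, le_trans hz2.le hN₁le⟩ hz2⟩
      rcases covstep1 hsoc hcov with heqann | hcovann
      · have hK : (annM N.annihilator : Submodule R M) = N₁ := by
          rw [← heqann]
          exact IH N₁ hN₁gt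
        obtain ⟨u, hu1, hu2⟩ := exists_series_bot_to N
        obtain ⟨t, ht1, ht2, ht3⟩ :=
          trans_series (f := fun P => (annM P.annihilator : Submodule R M)) hfstep
            u.length u rfl
        have hcovK : u.last ⋖ N₁ := by
          rw [hu2]
          exact hcov
        have hs2 := u.snoc N₁ hcovK
        have hJH := CompositionSeries.jordan_holder t (u.snoc N₁ hcovK)
          (by
            rw [ht1, hu1, RelSeries.head_snoc, hu1]
            show (annM (⊥ : Submodule R M).annihilator : Submodule R M) = ⊥
            rw [Submodule.annihilator_bot, annM_top])
          (by
            rw [ht2, hu2, RelSeries.last_snoc]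
            exact hK)
        have hlen := hJH.length_eq
        rw [RelSeries.snoc_length] at hlen
        omega
      · obtain ⟨r, hrN, hrN₁⟩ := SetLike.exists_of_lt hcovann.lt
        exact hrN₁ (Submodule.mem_annihilator.mpr fun z hz => (hN₁le hz) r hrN)
  intro N
  have := key N
  calc (N : Set M) = ((annM N.annihilator : Submodule R M) : Set M) := by rw [this]
    _ = {m : M | ∀ r ∈ N.annihilator, r • m = (0 : M)} := rfl
end

section
/- Let M be an R-module and suppose that either R is an Artinian ring or M is a Noetherian R-module. Then M has a minimal (nonzero) submodule if and only if M has a second submodule. Moreover, in this situation every second submodule of M is a semisimple R-module. -/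
open Pointwise

variable (R M : Type*) [CommRing R] [AddCommGroup M] [Module R M]

section Aux

variable {R M : Type*} [CommRing R] [AddCommGroup M] [Module R M]

lemma aux_mem_smul {r : R} {S : Submodule R M} {y : M} :
    y ∈ r • S ↔ ∃ x ∈ S, r • x = y := by
  rw [← SetLike.mem_coe, Submodule.coe_pointwise_smul]
  exact Set.mem_smul_set

lemma aux_smul_eq_bot_iff (r : R) (S : Submodule R M) :
    r • S = ⊥ ↔ r ∈ S.annihilator := by
  rw [Submodule.mem_annihilator]
  constructor
  · intro h x hx
    have : r • x ∈ r • S := Submodule.smul_mem_pointwise_smul x r S hx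
    rw [h] at this; simpa using this
  · intro h
    rw [eq_bot_iff]
    intro y hy
    obtain ⟨x, hx, rfl⟩ := aux_mem_smul.mp hy
    simpa using h x hx

lemma aux_ann_maximal (h : IsArtinianRing R ∨ IsNoetherian R M) (S : Submodule R M)
    (hS : IsSecondSubmodule R M S) : S.annihilator.IsMaximal := by
  have hne : S.annihilator ≠ ⊤ := by
    intro htop
    apply hS.1
    rw [eq_bot_iff]
    intro x hx
    simpa using Submodule.mem_annihilator.mp
      (htop ▸ Submodule.mem_top : (1 : R) ∈ S.annihilator) x hx
  rcases h with hA | hN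
  · haveI := hA
    rw [← IsArtinianRing.isPrime_iff_isMaximal]
    constructor
    · exact hne
    · intro r s hrs
      by_contra hcon
      push_neg at hcon
      obtain ⟨hr, hs⟩ := hcon
      have hrS : r • S = S :=
        (hS.2 r).resolve_right (fun e => hr ((aux_smul_eq_bot_iff r S).mp e))
      have hsS : s • S = S :=
        (hS.2 s).resolve_right (fun e => hs ((aux_smul_eq_bot_iff s S).mp e))
      have : (r * s) • S = S := by rw [mul_smul, hsS, hrS]
      exact hS.1 (this ▸ (aux_smul_eq_bot_iff (r * s) S).mpr hrs)
  · haveI := hN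
    haveI : IsNoetherian R S := inferInstance
    haveI hnt : Nontrivial S := Submodule.nontrivial_iff_ne_bot.mpr hS.1
    haveI : Nontrivial (Submodule R S) := ⟨⊥, ⊤, bot_ne_top⟩
    obtain ⟨N, hNc⟩ := IsCoatomic.exists_coatom (α := Submodule R S)
    haveI : IsSimpleModule R (S ⧸ N) := isSimpleModule_iff_isCoatom.mpr hNc
    have hm := IsSimpleModule.annihilator_isMaximal (R := R) (M := S ⧸ N)
    have hle : Module.annihilator R (S ⧸ N) ≤ S.annihilator := by
      intro r hr
      by_contra hrann
      have hrS : r • S = S :=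
        (hS.2 r).resolve_right (fun e => hrann ((aux_smul_eq_bot_iff r S).mp e))
      have hmem : ∀ x : S, r • x ∈ N := by
        intro x
        have := Module.mem_annihilator.mp hr (Submodule.Quotient.mk (p := N) x)
        rwa [← Submodule.Quotient.mk_smul, Submodule.Quotient.mk_eq_zero] at this
      have hTS : S ≤ N.map S.subtype := by
        intro y hy
        rw [← hrS] at hy
        obtain ⟨x, hx, rfl⟩ := aux_mem_smul.mp hy
        exact ⟨r • ⟨x, hx⟩, hmem ⟨x, hx⟩, rfl⟩
      have : N.map S.subtype = (⊤ : Submodule R S).map S.subtype := by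
        rw [Submodule.map_subtype_top]
        exact le_antisymm (Submodule.map_subtype_le S N) hTS
      exact hNc.1 (Submodule.map_injective_of_injective S.injective_subtype this)
    exact hm.eq_of_le hne hle ▸ hm

lemma aux_second_semisimple (h : IsArtinianRing R ∨ IsNoetherian R M) (S : Submodule R M)
    (hS : IsSecondSubmodule R M S) : IsSemisimpleModule R S := by
  have hp : S.annihilator.IsMaximal := aux_ann_maximal h S hS
  have hts : Module.IsTorsionBySet R S S.annihilator := by
    intro x r
    have := Submodule.mem_annihilator.mp r.2 x.1 x.2
    ext
    simpa using this
  letI : Module (R ⧸ S.annihilator) S := hts.module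
  letI : Field (R ⧸ S.annihilator) := Ideal.Quotient.field S.annihilator
  let l : S →ₛₗ[Ideal.Quotient.mk S.annihilator] S :=
    { toFun := id
      map_add' := fun _ _ => rfl
      map_smul' := fun r x => (hts.mk_smul r x).symm }
  exact (l.isSemisimpleModule_iff_of_bijective Function.bijective_id).mpr inferInstance

end Aux

/-- Thm 2.11: If `R` is Artinian or `M` is Noetherian, then `M` has a minimal submodule
iff `M` has a second submodule; moreover every second submodule of `M` is semisimple. -/
theorem stmt4 (h : IsArtinianRing R ∨ IsNoetherian R M) :
    ((∃ S : Submodule R M, IsAtom S) ↔ (∃ S : Submodule R M, IsSecondSubmodule R M S)) ∧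
      (∀ S : Submodule R M, IsSecondSubmodule R M S → IsSemisimpleModule R S) := by
  constructor
  · constructor
    · rintro ⟨S, hS⟩
      refine ⟨S, hS.1, fun r => ?_⟩
      rcases (Submodule.smul_le_self_of_tower r S).lt_or_eq with hlt | heq
      · exact Or.inr (hS.2 _ hlt)
      · exact Or.inl heq
    · rintro ⟨S, hS⟩
      haveI : IsSemisimpleModule R S := aux_second_semisimple h S hS
      haveI : Nontrivial S := Submodule.nontrivial_iff_ne_bot.mpr hS.1
      obtain ⟨T, hT⟩ := IsAtomic.exists_atom (Submodule R S)
      refine ⟨T.map S.subtype, ?_, ?_⟩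
      · intro e
        exact hT.1 (Submodule.map_injective_of_injective S.injective_subtype
          (by rw [e, Submodule.map_bot]))
      · intro b hb
        have hbS : b ≤ S := hb.le.trans (Submodule.map_subtype_le S T)
        have hmc : (b.comap S.subtype).map S.subtype = b := by
          rw [Submodule.map_comap_subtype]
          exact inf_eq_right.mpr hbS
        have hle : b.comap S.subtype ≤ T := by
          have := Submodule.comap_mono (f := S.subtype) hb.le
          rwa [Submodule.comap_map_eq_of_injective S.injective_subtype T] at this
        have hlt : b.comap S.subtype < T := by
          refine hle.lt_of_ne fun e => hb.ne ?_
          rw [← hmc, e]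
        rw [← hmc, hT.2 _ hlt, Submodule.map_bot]
  · exact fun S hS => aux_second_semisimple h S hS
end

section
/- Let M be an R-module and suppose that either R is an Artinian ring or M is a Noetherian R-module. Then Spec^s(M), with the second classical Zariski topology, is a T1-space if and only if either Spec^s(M) = ∅ or Spec^s(M) = Min(M), the set of all minimal submodules of M. -/
open Pointwise

variable (R M : Type*) [CommRing R] [AddCommGroup M] [Module R M]

variable {R M}

/-- Membership in a pointwise scalar multiple of a submodule. -/
lemma mem_ptsmul_iff {r : R} {S : Submodule R M} {x : M} :
    x ∈ r • S ↔ ∃ y ∈ S, r • y = x := by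
  constructor
  · intro hx
    have : x ∈ r • (S : Set M) := hx
    obtain ⟨y, hy, rfl⟩ := this
    exact ⟨y, hy, rfl⟩
  · rintro ⟨y, hy, rfl⟩
    exact Submodule.smul_mem_pointwise_smul y r S hy

lemma ptsmul_eq_bot_iff {r : R} {S : Submodule R M} :
    r • S = ⊥ ↔ ∀ s ∈ S, r • s = (0 : M) := by
  constructor
  · intro h s hs
    have : r • s ∈ r • S := Submodule.smul_mem_pointwise_smul s r S hs
    rw [h] at this
    simpa using this
  · intro h
    rw [eq_bot_iff]
    intro x hx
    obtain ⟨y, hy, rfl⟩ := mem_ptsmul_iff.mp hx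
    simp [h y hy]

/-- Every atom (minimal submodule) is second. -/
lemma isSecond_of_isAtom {S : Submodule R M} (hS : IsAtom S) :
    IsSecondSubmodule R M S := by
  refine ⟨hS.1, fun r => ?_⟩
  have hle : r • S ≤ S := by
    intro x hx
    obtain ⟨y, hy, rfl⟩ := mem_ptsmul_iff.mp hx
    exact S.smul_mem r hy
  rcases hle.lt_or_eq with h | h
  · exact Or.inr (hS.2 _ h)
  · exact Or.inl h

/-- The key property (★): every `c` acting surjectively on `S` is "invertible mod
the annihilator of `S`". -/
lemma star_of_hyp (h : IsArtinianRing R ∨ IsNoetherian R M) {S : Submodule R M}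
    (hS : IsSecondSubmodule R M S) :
    ∀ c : R, c • S = S → ∃ d : R, ∀ s ∈ S, (1 - d * c) • s = (0 : M) := by
  intro c hc
  rcases h with hA | hN
  · -- Artinian ring case: the annihilator of `S` is prime, hence maximal.
    set p : Ideal R := S.annihilator with hp
    obtain ⟨z, hzS, hz0⟩ := Submodule.ne_bot_iff S |>.mp hS.1
    have hprime : p.IsPrime := by
      rw [Ideal.isPrime_iff]
      constructor
      · intro htop
        have h1 : (1 : R) ∈ p := htop ▸ Submodule.mem_top
        have := Submodule.mem_annihilator.mp h1 z hzS
        simp at this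
        exact hz0 this
      · intro a b hab
        rw [or_iff_not_imp_left]
        intro ha
        have haS : a • S = S := by
          rcases hS.2 a with h' | h'
          · exact h'
          · exact absurd (Submodule.mem_annihilator.mpr (ptsmul_eq_bot_iff.mp h')) ha
        rw [Submodule.mem_annihilator]
        intro s hs
        rw [← haS] at hs
        obtain ⟨t, ht, rfl⟩ := mem_ptsmul_iff.mp hs
        have h2 : b • a • t = (a * b) • t := by rw [smul_smul, mul_comm]
        rw [h2]
        exact Submodule.mem_annihilator.mp hab t ht
    have hmax : p.IsMaximal := IsArtinianRing.isMaximal_of_isPrime p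
    have hcp : c ∉ p := by
      intro hcp
      have : c • S = ⊥ := ptsmul_eq_bot_iff.mpr (Submodule.mem_annihilator.mp hcp)
      rw [hc] at this
      exact hS.1 this
    obtain ⟨d, i, hi, hdi⟩ := hmax.exists_inv hcp
    refine ⟨d, fun s hs => ?_⟩
    have h1 : (1 : R) - d * c = i := by linear_combination -hdi
    rw [h1]
    exact Submodule.mem_annihilator.mp hi s hs
  · -- Noetherian module case: Nakayama's lemma.
    have hfg : S.FG := IsNoetherian.noetherian S
    have hle : S ≤ Ideal.span {c} • S := by
      rw [Submodule.ideal_span_singleton_smul, hc]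
    obtain ⟨r, hr1, hr2⟩ :=
      Submodule.exists_sub_one_mem_and_smul_eq_zero_of_fg_of_le_smul _ S hfg hle
    obtain ⟨d, hd⟩ := Ideal.mem_span_singleton'.mp hr1
    refine ⟨-d, fun s hs => ?_⟩
    have h1 : (1 : R) - -d * c = r := by linear_combination hd
    rw [h1]
    exact hr2 s hs

/-- Under property (★), the span of any nonzero element of a second submodule is an atom. -/
lemma span_isAtom {S : Submodule R M} (hS : IsSecondSubmodule R M S)
    (hstar : ∀ c : R, c • S = S → ∃ d : R, ∀ s ∈ S, (1 - d * c) • s = (0 : M))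
    {x : M} (hx : x ∈ S) (hx0 : x ≠ 0) : IsAtom (Submodule.span R {x}) := by
  constructor
  · simpa [Submodule.span_singleton_eq_bot] using hx0
  · intro T hT
    by_contra hT0
    obtain ⟨t, ht, ht0⟩ := Submodule.ne_bot_iff T |>.mp hT0
    have htx : t ∈ Submodule.span R {x} := hT.le ht
    obtain ⟨c, rfl⟩ := Submodule.mem_span_singleton.mp htx
    have hcS : c • S = S := by
      rcases hS.2 c with h' | h'
      · exact h'
      · exact absurd (ptsmul_eq_bot_iff.mp h' x hx) ht0
    obtain ⟨d, hd⟩ := hstar c hcS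
    have h1 : (1 - d * c) • x = 0 := hd x hx
    have hxT : x ∈ T := by
      have hx' : x = d • (c • x) := by
        rw [sub_smul, one_smul, sub_eq_zero] at h1
        rw [smul_smul]
        exact h1
      rw [hx']
      exact T.smul_mem d ht
    have : Submodule.span R {x} ≤ T := by
      rw [Submodule.span_le, Set.singleton_subset_iff]
      exact hxT
    exact absurd this hT.not_ge

variable (R M)

/-- Each `W^s(N)` is open. -/
lemma ws_isOpen (N : Submodule R M) : IsOpen (Ws R M N) :=
  TopologicalSpace.GenerateOpen.basic _ ⟨N, rfl⟩

/-- Each `V^{s*}(N)` is closed. -/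
lemma vs_isClosed (N : Submodule R M) : IsClosed (Vs R M N) :=
  ⟨ws_isOpen R M N⟩

/-- Open sets of the second classical Zariski topology are upward closed. -/
lemma isOpen_upward {U : Set (SecondSpec R M)} (hU : IsOpen U) :
    ∀ a b : SecondSpec R M, a.1 ≤ b.1 → a ∈ U → b ∈ U := by
  have hU' : TopologicalSpace.GenerateOpen
      {U | ∃ N : Submodule R M, U = Ws R M N} U := hU
  clear hU
  induction hU' with
  | basic V hV =>
    obtain ⟨N, rfl⟩ := hV
    intro a b hab ha hb
    exact ha (hab.trans hb)
  | univ => intro a b _ _; trivial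
  | inter U V _ _ ihU ihV =>
    rintro a b hab ⟨ha1, ha2⟩
    exact ⟨ihU a b hab ha1, ihV a b hab ha2⟩
  | sUnion S _ ih =>
    rintro a b hab ⟨V, hV, haV⟩
    exact ⟨V, hV, ih V hV a b hab haV⟩

/-- Thm 2.12: If `R` is Artinian or `M` is Noetherian, then `Spec^s(M)` is a T1-space iff
`Spec^s(M) = ∅` or `Spec^s(M) = Min(M)`, the set of minimal submodules of `M`. -/
theorem stmt5 (h : IsArtinianRing R ∨ IsNoetherian R M) :
    T1Space (SecondSpec R M) ↔
      ({S : Submodule R M | IsSecondSubmodule R M S} = ∅ ∨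
        {S : Submodule R M | IsSecondSubmodule R M S} = {S : Submodule R M | IsAtom S}) := by
  constructor
  · intro hT1
    right
    ext S
    simp only [Set.mem_setOf_eq]
    constructor
    · intro hS
      obtain ⟨x, hx, hx0⟩ := Submodule.ne_bot_iff S |>.mp hS.1
      have hA : IsAtom (Submodule.span R {x}) :=
        span_isAtom hS (star_of_hyp h hS) hx hx0
      have hAS : Submodule.span R {x} ≤ S := by
        rw [Submodule.span_le, Set.singleton_subset_iff]; exact hx
      set a : SecondSpec R M := ⟨Submodule.span R {x}, isSecond_of_isAtom hA⟩ with ha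
      set b : SecondSpec R M := ⟨S, hS⟩ with hb
      have hmem : a ∈ closure ({b} : Set (SecondSpec R M)) := by
        rw [mem_closure_iff]
        intro o ho hao
        exact ⟨b, isOpen_upward R M ho a b hAS hao, rfl⟩
      rw [closure_singleton] at hmem
      have hab : a = b := hmem
      have hval : Submodule.span R {x} = S := congrArg Subtype.val hab
      rwa [hval] at hA
    · intro hS
      exact isSecond_of_isAtom hS
  · rintro (he | hmin)
    · have hempty : IsEmpty (SecondSpec R M) := by
        constructor
        intro x
        have : x.1 ∈ ({S : Submodule R M | IsSecondSubmodule R M S}) := x.2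
        rw [he] at this
        exact this
      exact ⟨fun x => (hempty.false x).elim⟩
    · constructor
      intro x
      have hatom : IsAtom x.1 := by
        have : x.1 ∈ ({S : Submodule R M | IsSecondSubmodule R M S}) := x.2
        rw [hmin] at this
        exact this
      have hxs : ({x} : Set (SecondSpec R M)) = Vs R M x.1 := by
        ext y
        constructor
        · rintro rfl
          show y.1 ≤ y.1
          exact le_rfl
        · intro hy
          have hy' : y.1 ≤ x.1 := hy
          have : y.1 = x.1 := by
            rcases hy'.lt_or_eq with h' | h'
            · exact absurd (hatom.2 _ h') y.2.1
            · exact h'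
          exact Subtype.ext this
      rw [hxs]
      exact vs_isClosed R M x.1
end

section
/- Let M be an R-module such that Spec^s(M) is a finite set. Then the following are equivalent for Spec^s(M) with the second classical Zariski topology: (a) it is a Hausdorff space; (b) it is a T1-space; (c) it is the cofinite topology; (d) it is discrete; (e) S.dim(M) ≤ 0, i.e., there are no two second submodules S1 ⊊ S2 of M. -/
open Pointwise

variable (R M : Type*) [CommRing R] [AddCommGroup M] [Module R M]

/-- Cor 2.14: for a module with finite second spectrum, Hausdorff, T1, cofinite,
discrete, and `S.dim M ≤ 0` are all equivalent for `Spec^s(M)`. -/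
theorem stmt7 (hfin : Finite (SecondSpec R M)) :
    List.TFAE
      [ T2Space (SecondSpec R M),
        T1Space (SecondSpec R M),
        (∀ U : Set (SecondSpec R M), IsOpen U ↔ (U = ∅ ∨ Uᶜ.Finite)),
        DiscreteTopology (SecondSpec R M),
        ¬ ∃ S₁ S₂ : Submodule R M,
            IsSecondSubmodule R M S₁ ∧ IsSecondSubmodule R M S₂ ∧ S₁ < S₂ ] := by
  tfae_have 1 → 2 := fun _ => inferInstance
  tfae_have 2 → 4 := fun _ => Finite.instDiscreteTopology
  tfae_have 4 → 1 := fun h => @DiscreteTopology.toT2Space _ _ h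

  tfae_have 3 → 4 := by
    intro h
    exact discreteTopology_iff_forall_isOpen.mpr fun U => (h U).mpr (Or.inr (Set.toFinite _))
  tfae_have 4 → 3 := by
    intro h U
    constructor
    · intro _; exact Or.inr (Set.toFinite _)
    · intro _; exact @isOpen_discrete _ _ h U
  tfae_have 2 → 5 := by
    rintro ht ⟨S₁, S₂, h₁, h₂, hlt⟩
    have key : ∀ U : Set (SecondSpec R M), IsOpen U →
        (⟨S₁, h₁⟩ : SecondSpec R M) ∈ U → (⟨S₂, h₂⟩ : SecondSpec R M) ∈ U := by
      intro U hU
      induction hU with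
      | basic V hV =>
        obtain ⟨N, rfl⟩ := hV
        intro hm hle
        exact hm (le_trans hlt.le hle)
      | univ => intro _; trivial
      | inter V W _ _ ihV ihW => intro h; exact ⟨ihV h.1, ihW h.2⟩
      | sUnion s _ ih =>
        rintro ⟨V, hVs, hmem⟩
        exact ⟨V, hVs, ih V hVs hmem⟩
    have hne : (⟨S₁, h₁⟩ : SecondSpec R M) ≠ ⟨S₂, h₂⟩ := by
      intro e
      exact hlt.ne (congrArg Subtype.val e)
    have := key {(⟨S₂, h₂⟩ : SecondSpec R M)}ᶜ isClosed_singleton.isOpen_compl hne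
    exact this rfl
  tfae_have 5 → 2 := by
    intro h
    refine ⟨fun S => ?_⟩
    rw [← isOpen_compl_iff]
    have : ({S}ᶜ : Set (SecondSpec R M)) = Ws R M S.1 := by
      ext T
      simp only [Set.mem_compl_iff, Set.mem_singleton_iff, Ws, Vs, Set.mem_setOf_eq]
      constructor
      · intro hTS hle
        rcases lt_or_eq_of_le hle with hlt' | heq
        · exact h ⟨T.1, S.1, T.2, S.2, hlt'⟩
        · exact hTS (Subtype.ext heq)
      · intro hn hEq
        exact hn (hEq ▸ le_refl _)
    rw [this]
    exact TopologicalSpace.isOpen_generateFrom_of_mem ⟨S.1, rfl⟩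
  tfae_finish
end

section
/- Let M be an R-module with at least two second submodules. If Spec^s(M), with the second classical Zariski topology, is a Hausdorff space, then S.dim(M) = 0 (Spec^s(M) ≠ ∅ and there are no two second submodules S1 ⊊ S2), and there exist finitely many submodules N1, ..., Nn of M such that V^{s*}(Ni) ≠ Spec^s(M) for every i and Spec^s(M) = V^{s*}(N1) ∪ ... ∪ V^{s*}(Nn). -/
open Pointwise

variable (R M : Type*) [CommRing R] [AddCommGroup M] [Module R M]

/-- Every open set in the second classical Zariski topology is upward closed. -/
lemma open_upward {U : Set (SecondSpec R M)} (hU : IsOpen U) :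
    ∀ S₁ S₂ : SecondSpec R M, S₁.1 ≤ S₂.1 → S₁ ∈ U → S₂ ∈ U := by
  have h : TopologicalSpace.GenerateOpen {U | ∃ N : Submodule R M, U = Ws R M N} U := hU
  clear hU
  induction h with
  | basic u hu =>
    obtain ⟨N, rfl⟩ := hu
    intro S₁ S₂ hle h1
    intro h2
    exact h1 (le_trans hle h2)
  | univ => intro _ _ _ _; trivial
  | inter u v _ _ ihu ihv =>
    intro S₁ S₂ hle h1
    exact ⟨ihu S₁ S₂ hle h1.1, ihv S₁ S₂ hle h1.2⟩
  | sUnion s _ ih =>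
    rintro S₁ S₂ hle ⟨u, hu, h1⟩
    exact ⟨u, hu, ih u hu S₁ S₂ hle h1⟩

/-- Thm 2.19: if `M` has at least two second submodules and `Spec^s(M)` is Hausdorff,
then `S.dim M = 0` and `Spec^s(M)` is a finite union of proper `V^{s*}(Nᵢ)`'s. -/
theorem stmt8 (h2 : ∃ S₁ S₂ : SecondSpec R M, S₁ ≠ S₂)
    (hT2 : T2Space (SecondSpec R M)) :
    ((∃ S : Submodule R M, IsSecondSubmodule R M S) ∧
      ¬ ∃ S₁ S₂ : Submodule R M,
          IsSecondSubmodule R M S₁ ∧ IsSecondSubmodule R M S₂ ∧ S₁ < S₂) ∧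
      ∃ (n : ℕ) (N : Fin n → Submodule R M),
        (∀ i, Vs R M (N i) ≠ Set.univ) ∧ (⋃ i, Vs R M (N i)) = Set.univ := by
  obtain ⟨S₁, S₂, hne⟩ := h2
  constructor
  · refine ⟨⟨S₁.1, S₁.2⟩, ?_⟩
    rintro ⟨A, B, hA, hB, hlt⟩
    have hptne : (⟨A, hA⟩ : SecondSpec R M) ≠ ⟨B, hB⟩ := by
      intro h
      exact hlt.ne (congrArg Subtype.val h)
    obtain ⟨U, V, hUo, hVo, hAU, hBV, hUV⟩ := @t2_separation (SecondSpec R M) _ hT2 _ _ hptne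
    have hBU : (⟨B, hB⟩ : SecondSpec R M) ∈ U :=
      open_upward R M hUo ⟨A, hA⟩ ⟨B, hB⟩ hlt.le hAU
    exact Set.disjoint_left.mp hUV hBU hBV
  · obtain ⟨U, V, hUo, hVo, h1U, h2V, hUV⟩ := @t2_separation (SecondSpec R M) _ hT2 _ _ hne
    have hbasis := TopologicalSpace.isTopologicalBasis_of_subbasis
      (s := {U : Set (SecondSpec R M) | ∃ N : Submodule R M, U = Ws R M N}) rfl
    obtain ⟨v, hv, h1v, hvU⟩ := hbasis.exists_subset_of_mem_open h1U hUo
    obtain ⟨w, hw, h2w, hwV⟩ := hbasis.exists_subset_of_mem_open h2V hVo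
    obtain ⟨f, ⟨hffin, hfsub⟩, rfl⟩ := hv
    obtain ⟨g, ⟨hgfin, hgsub⟩, rfl⟩ := hw
    have key : ∀ u ∈ f ∪ g, ∃ N : Submodule R M, u = Ws R M N ∧ Vs R M N ≠ Set.univ := by
      rintro u (hu | hu)
      · obtain ⟨N, rfl⟩ := hfsub hu
        refine ⟨N, rfl, ?_⟩
        intro hcontra
        have : S₁ ∈ Ws R M N := h1v _ hu
        exact this (hcontra ▸ Set.mem_univ S₁)
      · obtain ⟨N, rfl⟩ := hgsub hu
        refine ⟨N, rfl, ?_⟩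
        intro hcontra
        have : S₂ ∈ Ws R M N := h2w _ hu
        exact this (hcontra ▸ Set.mem_univ S₂)
    choose! φ hφ using key
    have hfgfin : (f ∪ g).Finite := hffin.union hgfin
    classical
    set L : List (Set (SecondSpec R M)) := hfgfin.toFinset.toList with hL
    refine ⟨L.length, fun i => φ (L.get i), ?_, ?_⟩
    · intro i
      have hmem : L.get i ∈ f ∪ g := by
        have hmemL : L.get i ∈ L := L.get_mem _
        exact hfgfin.mem_toFinset.mp (Finset.mem_toList.mp hmemL)
      exact (hφ _ hmem).2
    · ext S
      simp only [Set.mem_iUnion, Set.mem_univ, iff_true]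
      by_contra hno
      push_neg at hno
      have hall : ∀ u ∈ f ∪ g, S ∈ u := by
        intro u hu
        have huL : u ∈ L := Finset.mem_toList.mpr (hfgfin.mem_toFinset.mpr hu)
        obtain ⟨i, hi⟩ := List.mem_iff_get.mp huL
        have : S ∉ Vs R M (φ u) := by
          have := hno i
          rwa [hi] at this
        rw [(hφ u hu).1]
        exact this
      have hSU : S ∈ U := hvU (fun u hu => hall u (Or.inl hu))
      have hSV : S ∈ V := hwV (fun u hu => hall u (Or.inr hu))
      exact Set.disjoint_left.mp hUV hSU hSV
end

section
/- Let M be an R-module, let soc(M) be the sum of all second submodules of M, and let I_M = Ann_R(soc(M)). Then for every second submodule S of M, Ann_R(S) is a prime ideal of R containing I_M, and the natural map ψ : Spec^s(M) → Spec(R/I_M) given by ψ(S) = Ann_R(S)/I_M is continuous, where Spec^s(M) carries the second classical Zariski topology and Spec(R/I_M) carries the Zariski topology. -/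
open Pointwise

variable (R M : Type*) [CommRing R] [AddCommGroup M] [Module R M]

lemma smul_eq_bot_iff_mem_ann (r : R) (S : Submodule R M) :
    r • S = ⊥ ↔ r ∈ Submodule.annihilator S := by
  rw [Submodule.mem_annihilator]
  constructor
  · intro h m hm
    have : r • m ∈ r • S := Submodule.smul_mem_pointwise_smul m r S hm
    rw [h] at this
    simpa using this
  · intro h
    rw [eq_bot_iff]
    intro x hx
    have : x ∈ r • (S : Set M) := hx
    obtain ⟨s, hs, rfl⟩ := this
    simpa using h s hs

lemma ann_isPrime (S : Submodule R M) (hS : IsSecondSubmodule R M S) :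
    (Submodule.annihilator S).IsPrime := by
  constructor
  · intro h
    apply hS.1
    rw [eq_bot_iff]
    intro m hm
    have : (1 : R) ∈ Submodule.annihilator S := h ▸ Submodule.mem_top
    simpa using Submodule.mem_annihilator.mp this m hm
  · intro a b hab
    by_cases ha : a ∈ Submodule.annihilator S
    · exact Or.inl ha
    · right
      rcases hS.2 a with haS | haS
      · rw [Submodule.mem_annihilator]
        intro m hm
        rw [← haS] at hm
        obtain ⟨s, hs, rfl⟩ := (hm : m ∈ a • (S : Set M))
        have h0 := Submodule.mem_annihilator.mp hab s hs
        show b • a • s = 0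
        rw [smul_smul, mul_comm, ← h0]
      · exact absurd ((smul_eq_bot_iff_mem_ann R M a S).mp haS) ha

/-- Prop 3.7: with `I_M = Ann_R(soc M)`, the annihilator of each second submodule is a
prime ideal containing `I_M`, and the natural map
`ψ : Spec^s(M) → Spec(R/I_M)`, `ψ(S) = Ann_R(S)/I_M`, is continuous. -/
theorem stmt12 :
    (∀ S : SecondSpec R M,
        (Submodule.annihilator S.1).IsPrime ∧
          Submodule.annihilator (secSocle R M ⊤) ≤ Submodule.annihilator S.1) ∧
      ∃ ψ : SecondSpec R M →
          PrimeSpectrum (R ⧸ Submodule.annihilator (secSocle R M ⊤)),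
        (∀ S : SecondSpec R M,
          (ψ S).asIdeal =
            Ideal.map (Ideal.Quotient.mk (Submodule.annihilator (secSocle R M ⊤)))
              (Submodule.annihilator S.1)) ∧
        Continuous ψ := by
  set I : Ideal R := Submodule.annihilator (secSocle R M ⊤) with hIdef
  have hle : ∀ S : SecondSpec R M, I ≤ Submodule.annihilator S.1 := by
    intro S
    apply Submodule.annihilator_mono
    exact le_sSup ⟨S.2, le_top⟩
  have hprime : ∀ S : SecondSpec R M, (Submodule.annihilator S.1).IsPrime :=
    fun S => ann_isPrime R M S.1 S.2
  refine ⟨fun S => ⟨hprime S, hle S⟩, ?_⟩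
  have hker : ∀ S : SecondSpec R M,
      RingHom.ker (Ideal.Quotient.mk I) ≤ Submodule.annihilator S.1 := by
    intro S; rw [Ideal.mk_ker]; exact hle S
  have hmapprime : ∀ S : SecondSpec R M,
      (Ideal.map (Ideal.Quotient.mk I) (Submodule.annihilator S.1)).IsPrime := by
    intro S
    haveI := hprime S
    exact Ideal.map_isPrime_of_surjective Ideal.Quotient.mk_surjective (hker S)
  refine ⟨fun S => ⟨Ideal.map (Ideal.Quotient.mk I) (Submodule.annihilator S.1),
    hmapprime S⟩, fun S => rfl, ?_⟩
  rw [continuous_iff_isClosed]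
  intro s hs
  obtain ⟨E, rfl⟩ := (PrimeSpectrum.isClosed_iff_zeroLocus s).mp hs
  set J : Ideal R := Ideal.comap (Ideal.Quotient.mk I) (Ideal.span E) with hJdef
  set N : Submodule R M :=
    { carrier := {m | ∀ r ∈ J, r • m = 0}
      add_mem' := fun {a b} ha hb => by
        intro r hr; rw [smul_add, ha r hr, hb r hr, add_zero]
      zero_mem' := fun r _ => smul_zero r
      smul_mem' := fun c m hm => by
        intro r hr; rw [smul_comm, hm r hr, smul_zero] } with hNdef
  have key : ∀ S : SecondSpec R M,
      (E ⊆ (Ideal.map (Ideal.Quotient.mk I) (Submodule.annihilator S.1) : Set _))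
        ↔ S.1 ≤ N := by
    intro S
    rw [← Ideal.span_le]
    constructor
    · intro h m hm r hr
      have h2 : J ≤ Submodule.annihilator S.1 := by
        have := Ideal.comap_mono (f := Ideal.Quotient.mk I) h
        rwa [Ideal.comap_map_of_surjective _ Ideal.Quotient.mk_surjective,
          ← RingHom.ker_eq_comap_bot, Ideal.mk_ker,
          sup_eq_left.mpr (hle S)] at this
      exact Submodule.mem_annihilator.mp (h2 hr) m hm
    · intro h
      have h2 : J ≤ Submodule.annihilator S.1 := by
        intro r hr
        rw [Submodule.mem_annihilator]
        intro m hm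
        exact h hm r hr
      calc Ideal.span E = Ideal.map (Ideal.Quotient.mk I) J :=
            (Ideal.map_comap_of_surjective _ Ideal.Quotient.mk_surjective _).symm
        _ ≤ Ideal.map (Ideal.Quotient.mk I) (Submodule.annihilator S.1) :=
            Ideal.map_mono h2
  have hpre : (fun S : SecondSpec R M =>
        (⟨Ideal.map (Ideal.Quotient.mk I) (Submodule.annihilator S.1), hmapprime S⟩ :
          PrimeSpectrum (R ⧸ I))) ⁻¹' PrimeSpectrum.zeroLocus E = Vs R M N := by
    ext S
    simp only [Set.mem_preimage, PrimeSpectrum.mem_zeroLocus]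
    exact key S
  rw [hpre]
  have : Vs R M N = (Ws R M N)ᶜ := by rw [Ws, compl_compl]
  rw [this]
  have hop : IsOpen (Ws R M N) :=
    TopologicalSpace.isOpen_generateFrom_of_mem
      (g := {U | ∃ N : Submodule R M, U = Ws R M N}) ⟨N, rfl⟩
  exact hop.isClosed_compl
end

section
/- Let M be an R-module and endow Spec^s(M) with the second classical Zariski topology. (a) If Y is a finite subset of Spec^s(M), then the closure of Y equals ∪_{S ∈ Y} V^{s*}(S). (b) If Y is a closed subset of Spec^s(M), then Y = ∪_{S ∈ Y} V^{s*}(S). -/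
open Pointwise

variable (R M : Type*) [CommRing R] [AddCommGroup M] [Module R M]

theorem upward_open (U : Set (SecondSpec R M))
    (hU : TopologicalSpace.GenerateOpen {U | ∃ N : Submodule R M, U = Ws R M N} U) :
    ∀ T S : SecondSpec R M, T.1 ≤ S.1 → T ∈ U → S ∈ U := by
  induction hU with
  | basic V hV =>
      obtain ⟨N, rfl⟩ := hV
      intro T S h hT hS
      exact hT (le_trans h hS)
  | univ => intro T S h hT; trivial
  | inter U V _ _ ihU ihV =>
      intro T S h hT
      exact ⟨ihU T S h hT.1, ihV T S h hT.2⟩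
  | sUnion 𝒮 _ ih =>
      intro T S hle hT
      obtain ⟨V, hV, hTV⟩ := hT
      exact ⟨V, hV, ih V hV T S hle hTV⟩

/-- Prop 2.200(a),(b): in `Spec^s(M)`, the closure of a finite set `Y` is
`⋃_{S ∈ Y} V^{s*}(S)`, and every closed set `Y` equals `⋃_{S ∈ Y} V^{s*}(S)`. -/
theorem stmt13 :
    (∀ Y : Set (SecondSpec R M), Y.Finite →
        closure Y = ⋃ S ∈ Y, Vs R M S.1) ∧
      (∀ Y : Set (SecondSpec R M), IsClosed Y →
        Y = ⋃ S ∈ Y, Vs R M S.1) := by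
  have closedVs : ∀ N : Submodule R M, IsClosed (Vs R M N) :=
    fun N => ⟨TopologicalSpace.GenerateOpen.basic _ ⟨N, rfl⟩⟩
  have hdown : ∀ (C : Set (SecondSpec R M)), IsClosed C → ∀ S ∈ C, Vs R M S.1 ⊆ C := by
    intro C hC S hS T hT
    by_contra hTC
    exact (upward_open R M Cᶜ hC.isOpen_compl T S hT hTC) hS
  constructor
  · intro Y hY
    apply subset_antisymm
    · apply closure_minimal
      · intro S hS
        exact Set.mem_biUnion hS (le_refl S.1)
      · exact hY.isClosed_biUnion (fun S _ => closedVs S.1)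
    · intro T hT
      obtain ⟨S, hS, hTS⟩ : ∃ S ∈ Y, T ∈ Vs R M S.1 := by simpa using hT
      exact hdown _ isClosed_closure S (subset_closure hS) hTS
  · intro Y hY
    apply subset_antisymm
    · intro S hS
      exact Set.mem_biUnion hS (le_refl S.1)
    · intro T hT
      obtain ⟨S, hS, hTS⟩ : ∃ S ∈ Y, T ∈ Vs R M S.1 := by simpa using hT
      exact hdown Y hY S hS hTS
end

section
/- Let M be an R-module having the descending chain condition on socle submodules (every descending chain of socle submodules of M stabilizes). Then Spec^s(M), equipped with the finer patch topology, is a compact space. -/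
open Pointwise

variable (R M : Type*) [CommRing R] [AddCommGroup M] [Module R M]

/-- The finer patch topology on `Spec^s(M)`, generated by the sub-basis
`{V^{s*}(N) ∩ W^s(K) : N, K ≤ M}`. -/
def patchTopology : TopologicalSpace (SecondSpec R M) :=
  TopologicalSpace.generateFrom
    {U | ∃ N K : Submodule R M, U = Vs R M N ∩ Ws R M K}

section Aux

variable {R M}

lemma secSocle_le (N : Submodule R M) : secSocle R M N ≤ N :=
  sSup_le fun _ hS => hS.2

lemma le_secSocle {S N : Submodule R M} (h1 : IsSecondSubmodule R M S) (h2 : S ≤ N) :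
    S ≤ secSocle R M N := le_sSup ⟨h1, h2⟩

lemma Vs_secSocle (N : Submodule R M) : Vs R M (secSocle R M N) = Vs R M N := by
  ext S
  exact ⟨fun h => le_trans h (secSocle_le N), fun h => le_secSocle S.2 h⟩

lemma secSocle_idem (N : Submodule R M) :
    secSocle R M (secSocle R M N) = secSocle R M N := by
  refine le_antisymm (secSocle_le _) ?_
  exact sSup_le fun S hS => le_sSup ⟨hS.1, le_secSocle hS.1 hS.2⟩

lemma mem_smul_submodule_iff {r : R} {N : Submodule R M} {a : M} :
    a ∈ r • N ↔ ∃ s ∈ N, r • s = a := by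
  rw [← SetLike.mem_coe, Submodule.coe_pointwise_smul]
  exact Set.mem_smul_set

lemma smul_submodule_le (r : R) (N : Submodule R M) : r • N ≤ N := by
  intro a ha
  obtain ⟨s, hs, rfl⟩ := mem_smul_submodule_iff.mp ha
  exact N.smul_mem r hs

lemma smul_submodule_mono (r : R) {N N' : Submodule R M} (h : N ≤ N') :
    r • N ≤ r • N' := by
  intro a ha
  obtain ⟨s, hs, rfl⟩ := mem_smul_submodule_iff.mp ha
  exact Submodule.smul_mem_pointwise_smul s r N' (h hs)

lemma smul_submodule_eq_bot_iff (r : R) (N : Submodule R M) :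
    r • N = ⊥ ↔ ∀ m ∈ N, r • m = (0 : M) := by
  constructor
  · intro h m hm
    have h2 : r • m ∈ r • N := Submodule.smul_mem_pointwise_smul m r N hm
    rw [h] at h2
    simpa using h2
  · intro h
    rw [eq_bot_iff]
    intro a ha
    obtain ⟨s, hs, rfl⟩ := mem_smul_submodule_iff.mp ha
    simpa using h s hs

/-- From an open set of the patch topology containing a point, extract a "box"
`Vs N ∩ ⋂ K ∈ Ks, Ws K` containing the point and contained in the set. -/
lemma exists_box {U : Set (SecondSpec R M)}
    (hU : TopologicalSpace.GenerateOpen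
      {U | ∃ N K : Submodule R M, U = Vs R M N ∩ Ws R M K} U)
    {x : SecondSpec R M} (hx : x ∈ U) :
    ∃ (N : Submodule R M) (Ks : Finset (Submodule R M)),
      (x.1 ≤ N ∧ ∀ K ∈ Ks, ¬ x.1 ≤ K) ∧
      ∀ S : SecondSpec R M, S.1 ≤ N → (∀ K ∈ Ks, ¬ S.1 ≤ K) → S ∈ U := by
  classical
  induction hU with
  | basic V hV =>
      obtain ⟨N, K, rfl⟩ := hV
      refine ⟨N, {K}, ⟨hx.1, ?_⟩, ?_⟩
      · intro K' hK'
        rw [Finset.mem_singleton] at hK'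
        subst hK'
        exact hx.2
      · intro S h1 h2
        exact ⟨h1, h2 K (Finset.mem_singleton_self K)⟩
  | univ => exact ⟨⊤, ∅, ⟨le_top, by simp⟩, fun _ _ _ => trivial⟩
  | inter V W hV hW ihV ihW =>
      obtain ⟨N₁, Ks₁, ⟨ha₁, hb₁⟩, hc₁⟩ := ihV hx.1
      obtain ⟨N₂, Ks₂, ⟨ha₂, hb₂⟩, hc₂⟩ := ihW hx.2
      refine ⟨N₁ ⊓ N₂, Ks₁ ∪ Ks₂, ⟨le_inf ha₁ ha₂, ?_⟩, ?_⟩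
      · intro K hK
        rcases Finset.mem_union.mp hK with h | h
        exacts [hb₁ K h, hb₂ K h]
      · intro S h1 h2
        exact ⟨hc₁ S (le_trans h1 inf_le_left)
                 (fun K hK => h2 K (Finset.mem_union_left _ hK)),
               hc₂ S (le_trans h1 inf_le_right)
                 (fun K hK => h2 K (Finset.mem_union_right _ hK))⟩
  | sUnion 𝒮 h𝒮 ih =>
      obtain ⟨V, hV, hxV⟩ := hx
      obtain ⟨N, Ks, h1, h2⟩ := ih V hV hxV
      exact ⟨N, Ks, h1, fun S hs hk => ⟨V, hV, h2 S hs hk⟩⟩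

/-- Existence of a minimal element of a nonempty family of socle submodules,
from the dcc hypothesis. -/
lemma exists_min
    (hdcc : ∀ f : ℕ → Submodule R M, (∀ n, secSocle R M (f n) = f n) →
      (∀ n, f (n + 1) ≤ f n) → ∃ n, ∀ m, n ≤ m → f m = f n)
    (T : Set (Submodule R M)) (hsoc : ∀ N ∈ T, secSocle R M N = N)
    (hne : T.Nonempty) : ∃ N ∈ T, ∀ N' ∈ T, ¬ N' < N := by
  by_contra h
  push_neg at h
  obtain ⟨N₀, hN₀⟩ := hne
  choose F hF1 hF2 using h
  let G : {N // N ∈ T} → {N // N ∈ T} := fun p => ⟨F p.1 p.2, hF1 p.1 p.2⟩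
  let f : ℕ → {N // N ∈ T} := fun n => G^[n] ⟨N₀, hN₀⟩
  have hstep : ∀ n, (f (n + 1)).1 < (f n).1 := by
    intro n
    have h1 : f (n + 1) = G (f n) := Function.iterate_succ_apply' G n _
    rw [h1]
    exact hF2 _ _
  obtain ⟨n, hn⟩ := hdcc (fun n => (f n).1) (fun n => hsoc _ (f n).2)
    (fun n => (hstep n).le)
  exact absurd (hn (n + 1) (Nat.le_succ n)) (hstep n).ne

/-- `N` is finitely coverable with respect to the family `U`. -/
def FCov {ι : Type*} (U : ι → Set (SecondSpec R M)) (N : Submodule R M) : Prop :=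
  ∃ t : Finset ι, Vs R M N ⊆ ⋃ i ∈ t, U i

lemma fcov_bot {ι : Type*} (U : ι → Set (SecondSpec R M)) : FCov U (⊥ : Submodule R M) := by
  refine ⟨∅, fun S hS => ?_⟩
  exact absurd (le_bot_iff.mp hS) S.2.1

lemma fcov_of_union {ι : Type*} {U : ι → Set (SecondSpec R M)} {N : Submodule R M}
    (t0 : Finset ι) (s : Finset (Submodule R M))
    (hs : ∀ K ∈ s, FCov U K)
    (hsub : ∀ S : SecondSpec R M, S ∈ Vs R M N →
      S ∈ ⋃ i ∈ t0, U i ∨ ∃ K ∈ s, S ∈ Vs R M K) :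
    FCov U N := by
  classical
  choose! g hg using hs
  refine ⟨t0 ∪ s.biUnion g, ?_⟩
  intro S hS
  rcases hsub S hS with h | ⟨K, hK, hSK⟩
  · obtain ⟨i, hi, hSi⟩ := Set.mem_iUnion₂.mp h
    exact Set.mem_iUnion₂.mpr ⟨i, Finset.mem_union_left _ hi, hSi⟩
  · obtain ⟨i, hi, hSi⟩ := Set.mem_iUnion₂.mp (hg K hK hSK)
    exact Set.mem_iUnion₂.mpr
      ⟨i, Finset.mem_union_right _ (Finset.mem_biUnion.mpr ⟨K, hK, hi⟩), hSi⟩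

lemma fcov_secSocle_iff {ι : Type*} (U : ι → Set (SecondSpec R M)) (N : Submodule R M) :
    FCov U (secSocle R M N) ↔ FCov U N := by
  unfold FCov
  rw [Vs_secSocle]

end Aux

/-- Thm 3.9: if `M` has dcc on socle submodules, then `Spec^s(M)` with the finer patch
topology is a compact space. -/
theorem stmt16
    (hdcc : ∀ f : ℕ → Submodule R M, (∀ n, secSocle R M (f n) = f n) →
      (∀ n, f (n + 1) ≤ f n) → ∃ n, ∀ m, n ≤ m → f m = f n) :
    @CompactSpace (SecondSpec R M) (patchTopology R M) := by
  classical
  refine @CompactSpace.mk _ (patchTopology R M) ?_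
  refine @isCompact_of_finite_subcover _ (patchTopology R M) Set.univ ?_
  intro ι U hUopen hcover
  by_contra hcon
  have hVtop : Vs R M ⊤ = Set.univ := by
    ext S; simp [Vs]
  -- the family of socle submodules that are not finitely coverable
  set T : Set (Submodule R M) := {N | secSocle R M N = N ∧ ¬ FCov U N} with hT
  have hTtop : secSocle R M ⊤ ∈ T := by
    refine ⟨secSocle_idem ⊤, fun hfc => hcon ?_⟩
    rw [fcov_secSocle_iff] at hfc
    obtain ⟨t, ht⟩ := hfc
    exact ⟨t, by rw [← hVtop]; exact ht⟩
  obtain ⟨N, hN, hmin⟩ := exists_min hdcc T (fun N hN => hN.1) ⟨_, hTtop⟩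
  -- every submodule strictly below N is finitely coverable
  have hsmall : ∀ N' : Submodule R M, N' < N → FCov U N' := by
    intro N' hlt
    by_contra hfc
    have h1 : secSocle R M N' ∈ T := by
      refine ⟨secSocle_idem N', fun h => hfc ?_⟩
      rwa [fcov_secSocle_iff] at h
    exact hmin _ h1 (lt_of_le_of_lt (secSocle_le N') hlt)
  have hNne : N ≠ ⊥ := by
    intro h
    exact hN.2 (h ▸ fcov_bot U)
  -- N is a second submodule
  have hsecond : IsSecondSubmodule R M N := by
    refine ⟨hNne, fun r => ?_⟩
    by_contra hr
    push_neg at hr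
    set B : Submodule R M := N ⊓ LinearMap.ker (LinearMap.lsmul R M r) with hB
    have hAlt : r • N < N := lt_of_le_of_ne (smul_submodule_le r N) hr.1
    have hBlt : B < N := by
      refine lt_of_le_of_ne inf_le_left (fun h => hr.2 ?_)
      rw [smul_submodule_eq_bot_iff]
      intro m hm
      have hmB : m ∈ B := h ▸ hm
      simpa using hmB.2
    refine hN.2 (fcov_of_union ∅ {r • N, B} ?_ ?_)
    · intro K hK
      rcases Finset.mem_insert.mp hK with h | h
      · exact h ▸ hsmall _ hAlt
      · rw [Finset.mem_singleton] at h
        exact h ▸ hsmall _ hBlt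
    · intro S hS
      right
      rcases S.2.2 r with h | h
      · refine ⟨r • N, Finset.mem_insert_self _ _, ?_⟩
        calc S.1 = r • S.1 := h.symm
          _ ≤ r • N := smul_submodule_mono r hS
      · refine ⟨B, Finset.mem_insert_of_mem (Finset.mem_singleton_self B), ?_⟩
        show S.1 ≤ N ⊓ LinearMap.ker (LinearMap.lsmul R M r)
        refine le_inf hS ?_
        intro m hm
        rw [LinearMap.mem_ker, LinearMap.lsmul_apply]
        exact (smul_submodule_eq_bot_iff r S.1).mp h m hm
  -- N, being second, is a point of the spectrum covered by some U i
  set x : SecondSpec R M := ⟨N, hsecond⟩ with hxdef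
  obtain ⟨i, hxU⟩ := Set.mem_iUnion.mp (hcover (Set.mem_univ x))
  obtain ⟨N₀, Ks, ⟨hxN₀, hxKs⟩, hbox⟩ := exists_box (hUopen i) hxU
  refine hN.2 (fcov_of_union {i} (Ks.image fun K => N ⊓ K) ?_ ?_)
  · intro K hK
    obtain ⟨K', hK', rfl⟩ := Finset.mem_image.mp hK
    refine hsmall _ (lt_of_le_of_ne (inf_le_left : N ⊓ K' ≤ N) (fun h => hxKs K' hK' ?_))
    exact le_of_eq_of_le h.symm inf_le_right
  · intro S hS
    by_cases h : ∀ K ∈ Ks, ¬ S.1 ≤ K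
    · left
      refine Set.mem_iUnion₂.mpr ⟨i, Finset.mem_singleton_self i, ?_⟩
      exact hbox S (le_trans hS hxN₀) h
    · right
      push_neg at h
      obtain ⟨K, hK, hSK⟩ := h
      exact ⟨N ⊓ K, Finset.mem_image.mpr ⟨K, hK, rfl⟩, le_inf hS hSK⟩
end
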